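/- Let D(s) = ∑_{n≥1} α(n)/n^s be a Dirichlet series, absolutely convergent for Re(s) large, that admits meromorphic continuation with a pole at s = σ₀ + it₀ with t₀ ≠ 0 real and nonzero residue. Then ∑_{n ≤ X} α(n) is not o(X^{σ₀}); i.e., limsup_{X→∞} |∑_{n≤X} α(n)|/X^{σ₀} > 0. -/

import Mathlib

open Filter Asymptotics Topology

/-- Partial sums of coefficients. -/
private noncomputable def psum (α : ℕ → ℂ) (N : ℕ) : ℂ := ∑ n ∈ Finset.Icc 1 N, α n

private lemma psum_zero (α : ℕ → ℂ) : psum α 0 = 0 := by simp [psum]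

private lemma psum_succ (α : ℕ → ℂ) (N : ℕ) : psum α (N + 1) = psum α N + α (N + 1) := by
  simp [psum, Finset.sum_Icc_succ_top (Nat.one_le_iff_ne_zero.mpr (Nat.succ_ne_zero N))]

private lemma hasDerivAt_ofReal_cpow_neg {s : ℂ} (hs : s ≠ 0) {x : ℝ} (hx : x ≠ 0) :
    HasDerivAt (fun y : ℝ => (y : ℂ) ^ (-s)) (-s * (x : ℂ) ^ (-s - 1)) x := by
  have hr : (-s - 1 : ℂ) ≠ -1 := by
    intro h; apply hs; linear_combination -h
  have h := (hasDerivAt_ofReal_cpow_const' hx hr).const_mul (-s)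
  have e : (fun y : ℝ => -s * ((y : ℂ) ^ (-s - 1 + 1) / (-s - 1 + 1))) =
      fun y : ℝ => (y : ℂ) ^ (-s) := by
    funext y
    have h1 : (-s - 1 + 1 : ℂ) = -s := by ring
    rw [h1]
    field_simp
  rw [e] at h
  exact h

/-- Uniform comparison of `x ^ e` with `N ^ e` for `x ∈ [N, N+1]`. -/
private lemma rpow_window_bound {e : ℝ} {N : ℕ} (hN : 1 ≤ N) {x : ℝ}
    (hx1 : (N : ℝ) ≤ x) (hx2 : x ≤ (N : ℝ) + 1) :
    x ^ e ≤ 2 ^ |e| * (N : ℝ) ^ e := by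
  have hNpos : (0 : ℝ) < (N : ℝ) := by exact_mod_cast hN
  have hxpos : (0 : ℝ) < x := lt_of_lt_of_le hNpos hx1
  have h2N : x ≤ 2 * (N : ℝ) := by
    have h1 : (1:ℝ) ≤ (N:ℝ) := by exact_mod_cast hN
    linarith
  rcases le_or_gt 0 e with he | he
  · calc x ^ e ≤ (2 * (N : ℝ)) ^ e := Real.rpow_le_rpow hxpos.le h2N he
      _ = 2 ^ e * (N : ℝ) ^ e := Real.mul_rpow (by norm_num) hNpos.le
      _ ≤ 2 ^ |e| * (N : ℝ) ^ e :=
          mul_le_mul_of_nonneg_right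
            (Real.rpow_le_rpow_of_exponent_le one_le_two (le_abs_self e))
            (Real.rpow_nonneg hNpos.le e)
  · calc x ^ e ≤ (N : ℝ) ^ e := Real.rpow_le_rpow_of_nonpos hNpos hx1 he.le
      _ ≤ 2 ^ |e| * (N : ℝ) ^ e := by
          nlinarith [Real.one_le_rpow (one_le_two (α := ℝ)) (abs_nonneg e),
            Real.rpow_nonneg (le_of_lt hNpos) e, Real.rpow_nonneg (le_of_lt hNpos) e]

/-- Mean-value bound for differences of complex powers. -/
private lemma cpow_diff_bound (s : ℂ) {N : ℕ} (hN : 1 ≤ N) :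
    ‖(N : ℂ) ^ (-s) - ((N : ℂ) + 1) ^ (-s)‖ ≤
      ‖s‖ * 2 ^ |s.re + 1| * (N : ℝ) ^ (-s.re - 1) := by
  have hNpos : (0 : ℝ) < (N : ℝ) := by exact_mod_cast hN
  rcases eq_or_ne s 0 with rfl | hs
  · simp only [neg_zero, Complex.cpow_zero, sub_self, norm_zero]
    positivity
  set C : ℝ := ‖s‖ * 2 ^ |s.re + 1| * (N : ℝ) ^ (-s.re - 1) with hC
  have hd : ∀ x ∈ Set.Icc (N : ℝ) ((N : ℝ) + 1),
      HasDerivWithinAt (fun y : ℝ => (y : ℂ) ^ (-s)) (-s * (x : ℂ) ^ (-s - 1))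
        (Set.Icc (N : ℝ) ((N : ℝ) + 1)) x := fun x hx =>
    (hasDerivAt_ofReal_cpow_neg hs (ne_of_gt (lt_of_lt_of_le hNpos hx.1))).hasDerivWithinAt
  have hb : ∀ x ∈ Set.Icc (N : ℝ) ((N : ℝ) + 1), ‖-s * (x : ℂ) ^ (-s - 1)‖ ≤ C := by
    intro x hx
    have hxpos : (0 : ℝ) < x := lt_of_lt_of_le hNpos hx.1
    have h1 : ‖-s * (x : ℂ) ^ (-s - 1)‖ = ‖s‖ * x ^ (-s.re - 1) := by
      rw [norm_mul, norm_neg,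
        Complex.norm_cpow_eq_rpow_re_of_pos hxpos]
      norm_num
    rw [h1, hC]
    have h2 : x ^ (-s.re - 1) ≤ 2 ^ |(-s.re - 1)| * (N : ℝ) ^ (-s.re - 1) :=
      rpow_window_bound hN hx.1 hx.2
    have h3 : |(-s.re - 1)| = |s.re + 1| := by rw [show -s.re - 1 = -(s.re + 1) by ring, abs_neg]
    rw [h3] at h2
    calc ‖s‖ * x ^ (-s.re - 1) ≤ ‖s‖ * (2 ^ |s.re + 1| * (N : ℝ) ^ (-s.re - 1)) := by
          exact mul_le_mul_of_nonneg_left h2 (norm_nonneg s)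
      _ = ‖s‖ * 2 ^ |s.re + 1| * (N : ℝ) ^ (-s.re - 1) := by ring
  have key := (convex_Icc (N : ℝ) ((N : ℝ) + 1)).norm_image_sub_le_of_norm_hasDerivWithin_le
    hd hb (Set.right_mem_Icc.mpr (by linarith)) (Set.left_mem_Icc.mpr (by linarith))
  simp only [Complex.ofReal_natCast, Complex.ofReal_add, Complex.ofReal_one] at key
  calc ‖(N : ℂ) ^ (-s) - ((N : ℂ) + 1) ^ (-s)‖ ≤ C * ‖(N : ℝ) - ((N : ℝ) + 1)‖ := by
        convert key using 3
    _ = C := by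
        rw [show (N : ℝ) - ((N : ℝ) + 1) = -1 by ring]
        simp

/-- Abel summation identity. -/
private lemma abel_identity (α : ℕ → ℂ) (s : ℂ) (M : ℕ) :
    ∑ N ∈ Finset.Icc 1 M, psum α N * ((N : ℂ) ^ (-s) - ((N : ℂ) + 1) ^ (-s)) =
      (∑ n ∈ Finset.Icc 1 M, α n * (n : ℂ) ^ (-s)) - psum α M * ((M : ℂ) + 1) ^ (-s) := by
  induction M with
  | zero => simp [psum_zero]
  | succ M ih =>
      rw [Finset.sum_Icc_succ_top (Nat.one_le_iff_ne_zero.mpr (Nat.succ_ne_zero M)),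
        Finset.sum_Icc_succ_top (Nat.one_le_iff_ne_zero.mpr (Nat.succ_ne_zero M)), ih,
        psum_succ]
      push_cast
      ring

/-- head-sum-free summability of the Abel series. -/
private lemma summable_norm_term {α : ℕ → ℂ} {σ₀ : ℝ} {M : ℝ}
    (hM : ∀ N : ℕ, 1 ≤ N → ‖psum α N‖ ≤ M * (N : ℝ) ^ σ₀) (hM0 : 0 ≤ M)
    {s : ℂ} (hs : σ₀ < s.re) :
    Summable (fun N : ℕ => ‖psum α N * ((N : ℂ) ^ (-s) - ((N : ℂ) + 1) ^ (-s))‖) := by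
  rw [← summable_nat_add_iff 1]
  have hsum : Summable (fun N : ℕ => (M * (‖s‖ * 2 ^ |s.re + 1|)) *
      ((N : ℝ) + 1) ^ (σ₀ - s.re - 1)) := by
    have h1 : Summable (fun N : ℕ => ((N : ℝ)) ^ (σ₀ - s.re - 1)) :=
      Real.summable_nat_rpow.2 (by linarith)
    have h2 := (summable_nat_add_iff 1).2 h1
    simpa [Nat.cast_add, Nat.cast_one] using h2.mul_left (M * (‖s‖ * 2 ^ |s.re + 1|))
  refine Summable.of_nonneg_of_le (fun N => norm_nonneg _) (fun N => ?_) hsum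
  have hN1 : 1 ≤ N + 1 := Nat.succ_le_succ (Nat.zero_le N)
  have hpos : (0 : ℝ) < ((N : ℝ) + 1) := by positivity
  have hb := cpow_diff_bound s hN1
  push_cast at hb
  have ha := hM (N + 1) hN1
  push_cast at ha
  have hcast : ((N + 1 : ℕ) : ℂ) = (N : ℂ) + 1 := by push_cast; ring
  rw [hcast]
  calc ‖psum α (N + 1) * (((N : ℂ) + 1) ^ (-s) - (((N : ℂ) + 1) + 1) ^ (-s))‖
      = ‖psum α (N + 1)‖ * ‖((N : ℂ) + 1) ^ (-s) - (((N : ℂ) + 1) + 1) ^ (-s)‖ := norm_mul _ _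
    _ ≤ (M * ((N : ℝ) + 1) ^ σ₀) * (‖s‖ * 2 ^ |s.re + 1| * ((N : ℝ) + 1) ^ (-s.re - 1)) := by
        exact mul_le_mul ha hb (norm_nonneg _) (by positivity)
    _ = (M * (‖s‖ * 2 ^ |s.re + 1|)) * (((N : ℝ) + 1) ^ σ₀ * ((N : ℝ) + 1) ^ (-s.re - 1)) := by
        ring
    _ = (M * (‖s‖ * 2 ^ |s.re + 1|)) * ((N : ℝ) + 1) ^ (σ₀ - s.re - 1) := by
        rw [← Real.rpow_add hpos]; ring_nf

/-- Elementary integral bound: `(n+1)^{-(1+δ)} ≤ (n^{-δ} - (n+1)^{-δ})/δ`. -/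
private lemma zeta_term_bound {δ : ℝ} (hδ : 0 < δ) {n : ℕ} (hn : 1 ≤ n) :
    ((n : ℝ) + 1) ^ (-(1 + δ)) ≤ (1 / δ) * ((n : ℝ) ^ (-δ) - ((n : ℝ) + 1) ^ (-δ)) := by
  have hn1 : (1 : ℝ) ≤ (n : ℝ) := by exact_mod_cast hn
  have hne : (0 : ℝ) ∉ Set.uIcc (n : ℝ) ((n : ℝ) + 1) := by
    rw [Set.uIcc_of_le (by linarith)]
    intro h; exact absurd h.1 (by linarith)
  have hint : ∫ x in (n : ℝ)..((n : ℝ) + 1), x ^ (-(1 + δ)) =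
      (((n : ℝ) + 1) ^ (-δ) - (n : ℝ) ^ (-δ)) / (-δ) := by
    rw [integral_rpow (Or.inr ⟨by intro h; apply absurd (by linarith : δ = 0) hδ.ne', hne⟩)]
    norm_num
  have hmono : ((n : ℝ) + 1) ^ (-(1 + δ)) * (((n : ℝ) + 1) - (n : ℝ)) ≤
      ∫ x in (n : ℝ)..((n : ℝ) + 1), x ^ (-(1 + δ)) := by
    have h0 := intervalIntegral.integral_const (a := (n : ℝ)) (b := (n : ℝ) + 1)
      (c := ((n : ℝ) + 1) ^ (-(1 + δ)))
    calc ((n : ℝ) + 1) ^ (-(1 + δ)) * (((n : ℝ) + 1) - (n : ℝ))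
        = ∫ _x in (n : ℝ)..((n : ℝ) + 1), ((n : ℝ) + 1) ^ (-(1 + δ)) := by
          rw [h0]; rw [smul_eq_mul]; ring
      _ ≤ ∫ x in (n : ℝ)..((n : ℝ) + 1), x ^ (-(1 + δ)) := by
          apply intervalIntegral.integral_mono_on (by linarith)
            intervalIntegrable_const
            (intervalIntegral.intervalIntegrable_rpow (Or.inr hne))
          intro x hx
          exact Real.rpow_le_rpow_of_nonpos (by linarith [hx.1]) hx.2 (by linarith)
  rw [hint] at hmono
  have key : ((n : ℝ) + 1) ^ (-(1 + δ)) ≤ (((n : ℝ) + 1) ^ (-δ) - (n : ℝ) ^ (-δ)) / (-δ) := by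
    calc ((n : ℝ) + 1) ^ (-(1 + δ)) = ((n : ℝ) + 1) ^ (-(1 + δ)) * (((n : ℝ) + 1) - (n : ℝ)) := by
          ring
      _ ≤ _ := hmono
  have : (((n : ℝ) + 1) ^ (-δ) - (n : ℝ) ^ (-δ)) / (-δ) =
      (1 / δ) * ((n : ℝ) ^ (-δ) - ((n : ℝ) + 1) ^ (-δ)) := by
    rw [div_neg, ← neg_div, neg_sub, div_eq_inv_mul, one_div]
  linarith [key, this.symm ▸ key]

/-- Uniform zeta-tail bound: `∑ (N+1)^{-(1+δ)} ≤ 1 + 1/δ`. -/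
private lemma zeta_tsum_bound {δ : ℝ} (hδ : 0 < δ) :
    ∑' N : ℕ, ((N : ℝ) + 1) ^ (-(1 + δ)) ≤ 1 + 1 / δ := by
  apply Real.tsum_le_of_sum_range_le (fun n => Real.rpow_nonneg (by positivity) _)
  intro M
  have claim : ∀ K : ℕ, ∑ N ∈ Finset.range K, ((N : ℝ) + 1) ^ (-(1 + δ)) ≤
      1 + (1 / δ) * (1 - (K : ℝ) ^ (-δ)) := by
    intro K
    induction K with
    | zero =>
        simp only [Finset.range_zero, Finset.sum_empty, Nat.cast_zero]
        rw [Real.zero_rpow (by linarith : -δ ≠ 0)]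
        have : 0 ≤ 1 / δ := by positivity
        linarith
    | succ K ih =>
        rw [Finset.sum_range_succ]
        rcases Nat.eq_zero_or_pos K with rfl | hK
        · simp only [Finset.range_zero, Finset.sum_empty, Nat.cast_zero, Nat.cast_one, zero_add]
          rw [Real.one_rpow, Real.one_rpow]
          norm_num
        · have hb := zeta_term_bound hδ hK
          have hcast : ((K + 1 : ℕ) : ℝ) = (K : ℝ) + 1 := by push_cast; ring
          rw [hcast]
          linarith
  calc ∑ N ∈ Finset.range M, ((N : ℝ) + 1) ^ (-(1 + δ)) ≤
        1 + (1 / δ) * (1 - (M : ℝ) ^ (-δ)) := claim M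
    _ ≤ 1 + 1 / δ := by
        have h1 : 0 ≤ (M : ℝ) ^ (-δ) := Real.rpow_nonneg (Nat.cast_nonneg M) _
        have h2 : 0 ≤ 1 / δ := by positivity
        nlinarith

/-- The Dirichlet series equals the Abel-summed series for `Re s > σa`. -/
private lemma E_eq_F {α : ℕ → ℂ} {σ₀ σa : ℝ} {E : ℂ → ℂ} {M : ℝ}
    (hα0 : α 0 = 0) (hσ : σ₀ ≤ σa)
    (hM : ∀ N : ℕ, 1 ≤ N → ‖psum α N‖ ≤ M * (N : ℝ) ^ σ₀) (hM0 : 0 ≤ M)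
    (hsum : ∀ s : ℂ, σa < s.re → Summable fun n : ℕ => ‖α n / (n : ℂ) ^ s‖)
    (hE : ∀ s : ℂ, σa < s.re → E s = ∑' n : ℕ, α n / (n : ℂ) ^ s)
    {s : ℂ} (hs : σa < s.re) :
    E s = ∑' N : ℕ, psum α N * ((N : ℂ) ^ (-s) - ((N : ℂ) + 1) ^ (-s)) := by
  have hs0 : σ₀ < s.re := lt_of_le_of_lt hσ hs
  set T : ℕ → ℂ := fun n => α n * (n : ℂ) ^ (-s) with hT
  set G : ℕ → ℂ := fun N => psum α N * ((N : ℂ) ^ (-s) - ((N : ℂ) + 1) ^ (-s)) with hG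
  have hIcc : ∀ f : ℕ → ℂ, f 0 = 0 → ∀ K : ℕ,
      ∑ n ∈ Finset.range (K + 1), f n = ∑ n ∈ Finset.Icc 1 K, f n := by
    intro f hf K
    have h1 : Finset.range (K + 1) = Finset.Icc 0 K := by
      rw [← Nat.Ico_zero_eq_range, Finset.Ico_add_one_right_eq_Icc]
    rw [h1, Finset.Icc_eq_cons_Ioc (Nat.zero_le K), Finset.sum_cons, hf, zero_add,
      ← Finset.Icc_add_one_left_eq_Ioc, zero_add]
  -- the Abel series converges
  have hsummG := summable_norm_term hM hM0 hs0
  have hGsum : HasSum G (∑' N, G N) := (hsummG.of_norm).hasSum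
  have hG0 : G 0 = 0 := by simp [hG, psum_zero]
  have htend2 : Tendsto (fun K : ℕ => ∑ N ∈ Finset.Icc 1 K, G N) atTop (𝓝 (∑' N, G N)) := by
    have h := hGsum.tendsto_sum_nat.comp (tendsto_add_atTop_nat 1)
    simpa only [Function.comp_def, hIcc G hG0] using h
  -- the Dirichlet series converges to E s
  have hT0 : T 0 = 0 := by simp [hT, hα0]
  have hTf : ∀ n : ℕ, α n / (n : ℂ) ^ s = T n := fun n => by
    show α n / (n : ℂ) ^ s = α n * (n : ℂ) ^ (-s)
    rw [Complex.cpow_neg, div_eq_mul_inv]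
  have hαsum : HasSum T (E s) := by
    have h := ((hsum s hs).of_norm).hasSum
    rw [hE s hs]
    have heq : (fun n : ℕ => α n / (n : ℂ) ^ s) = T := funext hTf
    rw [show (∑' n : ℕ, α n / (n : ℂ) ^ s) = ∑' n : ℕ, T n from by rw [heq]]
    rwa [heq] at h
  have htend1 : Tendsto (fun K : ℕ => ∑ n ∈ Finset.Icc 1 K, T n) atTop (𝓝 (E s)) := by
    have h := hαsum.tendsto_sum_nat.comp (tendsto_add_atTop_nat 1)
    simpa only [Function.comp_def, hIcc T hT0] using h
  -- the boundary term tends to zero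
  have htend0 : Tendsto (fun K : ℕ => psum α K * ((K : ℂ) + 1) ^ (-s)) atTop (𝓝 0) := by
    apply squeeze_zero_norm' (a := fun K : ℕ => (M * 2 ^ |(-s.re)|) * (K : ℝ) ^ (σ₀ - s.re))
    · filter_upwards [eventually_ge_atTop 1] with K hK
      have hKpos : (0 : ℝ) < (K : ℝ) := by exact_mod_cast hK
      have hnorm : ‖((K : ℂ) + 1) ^ (-s)‖ = ((K : ℝ) + 1) ^ (-s.re) := by
        have hcast : ((K : ℂ) + 1) = (((K : ℝ) + 1 : ℝ) : ℂ) := by push_cast; ring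
        rw [hcast, Complex.norm_cpow_eq_rpow_re_of_pos (by linarith),
          Complex.neg_re]
      have hwin : ((K : ℝ) + 1) ^ (-s.re) ≤ 2 ^ |(-s.re)| * (K : ℝ) ^ (-s.re) :=
        rpow_window_bound hK (by linarith) (le_refl _)
      calc ‖psum α K * ((K : ℂ) + 1) ^ (-s)‖
          = ‖psum α K‖ * ‖((K : ℂ) + 1) ^ (-s)‖ := norm_mul _ _
        _ ≤ (M * (K : ℝ) ^ σ₀) * (2 ^ |(-s.re)| * (K : ℝ) ^ (-s.re)) := by
            rw [hnorm]
            exact mul_le_mul (hM K hK) hwin (Real.rpow_nonneg (by linarith) _)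
              (by positivity)
        _ = (M * 2 ^ |(-s.re)|) * ((K : ℝ) ^ σ₀ * (K : ℝ) ^ (-s.re)) := by ring
        _ = (M * 2 ^ |(-s.re)|) * (K : ℝ) ^ (σ₀ - s.re) := by
            rw [← Real.rpow_add hKpos]; ring_nf
    · have h1 : Tendsto (fun x : ℝ => x ^ (σ₀ - s.re)) atTop (𝓝 0) := by
        have := tendsto_rpow_neg_atTop (by linarith : (0 : ℝ) < s.re - σ₀)
        simpa [neg_sub] using this
      have h2 := (h1.comp tendsto_natCast_atTop_atTop).const_mul (M * 2 ^ |(-s.re)|)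
      simpa using h2
  -- combine
  have hcomb : Tendsto (fun K : ℕ => psum α K * ((K : ℂ) + 1) ^ (-s)) atTop
      (𝓝 (E s - ∑' N, G N)) := by
    have h := htend1.sub htend2
    have heq : (fun K : ℕ => (∑ n ∈ Finset.Icc 1 K, T n) - ∑ N ∈ Finset.Icc 1 K, G N) =
        fun K : ℕ => psum α K * ((K : ℂ) + 1) ^ (-s) := by
      funext K
      have h2 := abel_identity α s K
      show (∑ n ∈ Finset.Icc 1 K, T n) - ∑ N ∈ Finset.Icc 1 K, G N =
        psum α K * ((K : ℂ) + 1) ^ (-s)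
      have hTeq : ∀ n, T n = α n * (n : ℂ) ^ (-s) := fun n => rfl
      have hGeq : ∀ N, G N = psum α N * ((N : ℂ) ^ (-s) - ((N : ℂ) + 1) ^ (-s)) :=
        fun N => rfl
      simp only [hTeq, hGeq]
      rw [h2]
      ring
    rwa [heq] at h
  have := tendsto_nhds_unique hcomb htend0
  have h0 : E s - ∑' N, G N = 0 := this
  rw [sub_eq_zero] at h0
  exact h0

/-- The Abel-summed series is analytic on the open half-plane `Re s > σ₀`. -/
private lemma F_analyticAt {α : ℕ → ℂ} {σ₀ M : ℝ}
    (hM : ∀ N : ℕ, 1 ≤ N → ‖psum α N‖ ≤ M * (N : ℝ) ^ σ₀) (hM0 : 0 ≤ M)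
    {z : ℂ} (hz : σ₀ < z.re) :
    AnalyticAt ℂ (fun s : ℂ => ∑' N : ℕ, psum α N * ((N : ℂ) ^ (-s) - ((N : ℂ) + 1) ^ (-s)))
      z := by
  set c : ℝ := (σ₀ + z.re) / 2 with hc
  have hcσ : σ₀ < c := by rw [hc]; linarith
  set V : Set ℂ := {s : ℂ | c < s.re} ∩ Metric.ball z 1 with hV
  have hVo : IsOpen V := (isOpen_lt continuous_const Complex.continuous_re).inter
    Metric.isOpen_ball
  have hzV : z ∈ V := ⟨by simp only [Set.mem_setOf_eq]; rw [hc]; linarith,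
    Metric.mem_ball_self one_pos⟩
  set b : ℝ := |σ₀| + |z.re| + 2 with hb
  set u : ℕ → ℝ := fun N => (M * ((‖z‖ + 1) * 2 ^ b)) * (N : ℝ) ^ (σ₀ - c - 1) with hu
  have husum : Summable u := by
    have h1 : Summable (fun N : ℕ => ((N : ℝ)) ^ (σ₀ - c - 1)) :=
      Real.summable_nat_rpow.2 (by linarith)
    exact h1.mul_left _
  have hbd : ∀ N : ℕ, ∀ w ∈ V, ‖psum α N * ((N : ℂ) ^ (-w) - ((N : ℂ) + 1) ^ (-w))‖ ≤ u N := by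
    intro N w hw
    rcases Nat.eq_zero_or_pos N with rfl | hN
    · rw [psum_zero, zero_mul, norm_zero]
      have : u 0 = 0 := by
        simp only [hu, Nat.cast_zero]
        rw [Real.zero_rpow (by linarith : σ₀ - c - 1 ≠ 0), mul_zero]
      rw [this]
    · obtain ⟨hw1, hw2⟩ := hw
      have hw1' : c < w.re := hw1
      have hdist : ‖w - z‖ < 1 := by rwa [← dist_eq_norm]
      have hwz : ‖w‖ ≤ ‖z‖ + 1 := by
        calc ‖w‖ = ‖z + (w - z)‖ := by ring_nf
          _ ≤ ‖z‖ + ‖w - z‖ := norm_add_le _ _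
          _ ≤ ‖z‖ + 1 := by linarith
      have hre : w.re < z.re + 1 := by
        have h1 : |(w - z).re| ≤ ‖w - z‖ := Complex.abs_re_le_norm (w - z)
        rw [Complex.sub_re] at h1
        have := le_abs_self (w.re - z.re)
        linarith
      have habs : |w.re + 1| ≤ b := by
        rw [abs_le]
        constructor
        · have h1 : -(|σ₀| + |z.re|) / 2 ≤ c := by
            rw [hc]
            have := neg_abs_le σ₀
            have := neg_abs_le z.re
            linarith
          rw [hb]
          have := abs_nonneg σ₀
          have := abs_nonneg z.re
          linarith
        · rw [hb]
          have := le_abs_self z.re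
          have := abs_nonneg σ₀
          linarith
      have hNpos : (0 : ℝ) < (N : ℝ) := by exact_mod_cast hN
      have hN1 : (1 : ℝ) ≤ (N : ℝ) := by exact_mod_cast hN
      have hcd := cpow_diff_bound w hN
      have step1 : ‖w‖ * 2 ^ |w.re + 1| * (N : ℝ) ^ (-w.re - 1) ≤
          (‖z‖ + 1) * 2 ^ b * (N : ℝ) ^ (-c - 1) := by
        have e1 : (2 : ℝ) ^ |w.re + 1| ≤ 2 ^ b :=
          Real.rpow_le_rpow_of_exponent_le one_le_two habs
        have e2 : (N : ℝ) ^ (-w.re - 1) ≤ (N : ℝ) ^ (-c - 1) :=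
          Real.rpow_le_rpow_of_exponent_le hN1 (by linarith)
        have p1 : (0 : ℝ) ≤ 2 ^ |w.re + 1| := by positivity
        have p2 : (0 : ℝ) ≤ (N : ℝ) ^ (-w.re - 1) := Real.rpow_nonneg hNpos.le _
        have p3 : (0 : ℝ) ≤ ‖z‖ + 1 := by positivity
        have p4 : (0 : ℝ) ≤ 2 ^ b := by positivity
        calc ‖w‖ * 2 ^ |w.re + 1| * (N : ℝ) ^ (-w.re - 1)
            ≤ (‖z‖ + 1) * 2 ^ b * (N : ℝ) ^ (-w.re - 1) := by
              apply mul_le_mul_of_nonneg_right _ p2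
              exact mul_le_mul hwz e1 p1 p3
          _ ≤ (‖z‖ + 1) * 2 ^ b * (N : ℝ) ^ (-c - 1) := by
              apply mul_le_mul_of_nonneg_left e2 (by positivity)
      calc ‖psum α N * ((N : ℂ) ^ (-w) - ((N : ℂ) + 1) ^ (-w))‖
          = ‖psum α N‖ * ‖(N : ℂ) ^ (-w) - ((N : ℂ) + 1) ^ (-w)‖ := norm_mul _ _
        _ ≤ (M * (N : ℝ) ^ σ₀) * ((‖z‖ + 1) * 2 ^ b * (N : ℝ) ^ (-c - 1)) :=
            mul_le_mul (hM N hN) (le_trans hcd step1) (norm_nonneg _) (by positivity)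
        _ = (M * ((‖z‖ + 1) * 2 ^ b)) * ((N : ℝ) ^ σ₀ * (N : ℝ) ^ (-c - 1)) := by ring
        _ = u N := by
            rw [hu, ← Real.rpow_add hNpos]
            ring_nf
  have hdiff : ∀ N : ℕ, DifferentiableOn ℂ
      (fun s : ℂ => psum α N * ((N : ℂ) ^ (-s) - ((N : ℂ) + 1) ^ (-s))) V := by
    intro N
    rcases Nat.eq_zero_or_pos N with rfl | hN
    · have heq : (fun s : ℂ => psum α 0 * ((0 : ℕ) ^ (-s) - ((0 : ℕ) + 1) ^ (-s))) =
          fun _ : ℂ => (0 : ℂ) := by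
        funext s; rw [psum_zero, zero_mul]
      rw [show ((0 : ℕ) : ℂ) = (0 : ℂ) by norm_num] at heq ⊢
      rw [heq]
      exact differentiableOn_const 0
    · have hN0 : ((N : ℂ)) ≠ 0 := Nat.cast_ne_zero.mpr (Nat.pos_iff_ne_zero.mp hN)
      have hN10 : ((N : ℂ) + 1) ≠ 0 := by
        have := Nat.cast_add_one_ne_zero (R := ℂ) N
        push_cast at this ⊢
        exact this
      have d1 : Differentiable ℂ (fun s : ℂ => (N : ℂ) ^ (-s)) :=
        Differentiable.const_cpow (differentiable_id.neg) (Or.inl hN0)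
      have d2 : Differentiable ℂ (fun s : ℂ => ((N : ℂ) + 1) ^ (-s)) :=
        Differentiable.const_cpow (differentiable_id.neg) (Or.inl hN10)
      exact (((d1.sub d2).const_mul _)).differentiableOn
  exact (Complex.differentiableOn_tsum_of_summable_norm husum hdiff hVo hbd).analyticAt
    (hVo.mem_nhds hzV)

/-- Landau-type Omega result: if the Dirichlet series `D(s) = ∑ α(n)/n^s` admits
meromorphic continuation with a pole at `s₀ = σ₀ + it₀`, `t₀ ≠ 0`, with nonzero
residue, then `∑_{n ≤ X} α(n)` is not `o(X^{σ₀})`. -/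
theorem omega_result_of_nonreal_pole (α : ℕ → ℂ) (E : ℂ → ℂ) (σa σ₀ t₀ : ℝ) (r : ℂ)
    (hα0 : α 0 = 0) (hσ : σ₀ ≤ σa)
    (hsum : ∀ s : ℂ, σa < s.re → Summable (fun n : ℕ => ‖α n / (n : ℂ) ^ s‖))
    (hE : ∀ s : ℂ, σa < s.re → E s = ∑' n : ℕ, α n / (n : ℂ) ^ s)
    (ht₀ : t₀ ≠ 0)
    (hholo : ∀ s : ℂ, σ₀ ≤ s.re → s ≠ (σ₀ : ℂ) + t₀ * Complex.I →
      s ≠ (σ₀ : ℂ) - t₀ * Complex.I → DifferentiableAt ℂ E s)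
    (hpole : Tendsto (fun s : ℂ => (s - ((σ₀ : ℂ) + t₀ * Complex.I)) * E s)
      (nhdsWithin ((σ₀ : ℂ) + t₀ * Complex.I) {((σ₀ : ℂ) + t₀ * Complex.I)}ᶜ) (nhds r))
    (hr : r ≠ 0) :
    ¬ (fun X : ℕ => ‖∑ n ∈ Finset.Icc 1 X, α n‖) =o[atTop]
        (fun X : ℕ => (X : ℝ) ^ σ₀) := by
  intro h
  have h' : (fun X : ℕ => ‖psum α X‖) =o[atTop] (fun X : ℕ => (X : ℝ) ^ σ₀) := h
  -- Step A: global polynomial bound on partial sums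
  obtain ⟨C, hCpos, hCO⟩ := h'.isBigO.exists_pos
  have hCev := hCO.bound
  rw [eventually_atTop] at hCev
  obtain ⟨N₁, hN₁⟩ := hCev
  set B : ℝ := ∑ n ∈ Finset.range (N₁ + 1), ‖psum α n‖ * (n : ℝ) ^ (-σ₀) with hB
  have hBnn : 0 ≤ B := Finset.sum_nonneg fun n _ => by positivity
  set M : ℝ := C + B with hMdef
  have hM0 : 0 ≤ M := by positivity
  have hM : ∀ N : ℕ, 1 ≤ N → ‖psum α N‖ ≤ M * (N : ℝ) ^ σ₀ := by
    intro N hN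
    have hNpos : (0 : ℝ) < (N : ℝ) := by exact_mod_cast hN
    have hrnn : (0 : ℝ) ≤ (N : ℝ) ^ σ₀ := Real.rpow_nonneg hNpos.le _
    rcases le_or_gt N₁ N with hle | hlt
    · have h1 := hN₁ N hle
      rw [norm_norm, Real.norm_of_nonneg hrnn] at h1
      calc ‖psum α N‖ ≤ C * (N : ℝ) ^ σ₀ := h1
        _ ≤ M * (N : ℝ) ^ σ₀ := by
            apply mul_le_mul_of_nonneg_right _ hrnn
            rw [hMdef]; linarith
    · have hmem : N ∈ Finset.range (N₁ + 1) := Finset.mem_range.mpr (by omega)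
      have h2 : ‖psum α N‖ * (N : ℝ) ^ (-σ₀) ≤ B :=
        Finset.single_le_sum (f := fun n => ‖psum α n‖ * (n : ℝ) ^ (-σ₀))
          (fun n _ => by positivity) hmem
      have h3 : ‖psum α N‖ = (‖psum α N‖ * (N : ℝ) ^ (-σ₀)) * (N : ℝ) ^ σ₀ := by
        rw [mul_assoc, ← Real.rpow_add hNpos]
        norm_num
      rw [h3]
      apply mul_le_mul_of_nonneg_right _ hrnn
      calc ‖psum α N‖ * (N : ℝ) ^ (-σ₀) ≤ B := h2
        _ ≤ M := by rw [hMdef]; linarith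
  -- Step B: identity theorem
  set F : ℂ → ℂ := fun s => ∑' N : ℕ, psum α N * ((N : ℂ) ^ (-s) - ((N : ℂ) + 1) ^ (-s))
    with hF
  set s₀ : ℂ := (σ₀ : ℂ) + t₀ * Complex.I with hs₀
  have hs₀re : s₀.re = σ₀ := by
    rw [hs₀]
    simp [Complex.add_re, Complex.ofReal_re, Complex.mul_re, Complex.I_re, Complex.I_im,
      Complex.ofReal_im]
  have hs₁re : ((σ₀ : ℂ) - t₀ * Complex.I).re = σ₀ := by
    simp [Complex.sub_re, Complex.ofReal_re, Complex.mul_re, Complex.I_re, Complex.I_im,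
      Complex.ofReal_im]
  set U : Set ℂ := {s : ℂ | σ₀ < s.re} with hU
  have hUopen : IsOpen U := isOpen_lt continuous_const Complex.continuous_re
  have hEan : AnalyticOnNhd ℂ E U := by
    intro w hw
    have hwre : σ₀ < w.re := hw
    have hne1 : w ≠ s₀ := by
      intro heq; rw [heq, hs₀re] at hwre; exact lt_irrefl _ hwre
    have hne2 : w ≠ (σ₀ : ℂ) - t₀ * Complex.I := by
      intro heq; rw [heq, hs₁re] at hwre; exact lt_irrefl _ hwre
    have hdiff : DifferentiableOn ℂ E U := by
      intro v hv
      have hvre : σ₀ < v.re := hv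
      have hv1 : v ≠ s₀ := by
        intro heq; rw [heq, hs₀re] at hvre; exact lt_irrefl _ hvre
      have hv2 : v ≠ (σ₀ : ℂ) - t₀ * Complex.I := by
        intro heq; rw [heq, hs₁re] at hvre; exact lt_irrefl _ hvre
      exact (hholo v hvre.le hv1 hv2).differentiableWithinAt
    exact hdiff.analyticAt (hUopen.mem_nhds hw)
  have hFan : AnalyticOnNhd ℂ F U := fun w hw => F_analyticAt hM hM0 hw
  have hz₀U : ((σa + 1 : ℝ) : ℂ) ∈ U := by
    simp only [hU, Set.mem_setOf_eq, Complex.ofReal_re]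
    linarith
  have hfg : E =ᶠ[𝓝 ((σa + 1 : ℝ) : ℂ)] F := by
    have hop : IsOpen {s : ℂ | σa < s.re} := isOpen_lt continuous_const Complex.continuous_re
    have hmem : {s : ℂ | σa < s.re} ∈ 𝓝 ((σa + 1 : ℝ) : ℂ) := by
      apply hop.mem_nhds
      simp only [Set.mem_setOf_eq, Complex.ofReal_re]
      linarith
    exact Filter.eventuallyEq_of_mem hmem fun s hs =>
      E_eq_F hα0 hσ hM hM0 hsum hE hs
  have hEF : Set.EqOn E F U :=
    hEan.eqOn_of_preconnected_of_eventuallyEq hFan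
      (convex_halfSpace_re_gt σ₀).isPreconnected hz₀U hfg
  -- Step C: limit along the horizontal approach
  have hpath : Tendsto (fun δ : ℝ => s₀ + (δ : ℂ)) (𝓝[>] (0 : ℝ))
      (nhdsWithin s₀ {s₀}ᶜ) := by
    apply tendsto_nhdsWithin_of_tendsto_nhds_of_eventually_within
    · have hcont : Continuous (fun δ : ℝ => s₀ + (δ : ℂ)) :=
        continuous_const.add Complex.continuous_ofReal
      have := hcont.tendsto 0
      simp only [Complex.ofReal_zero, add_zero] at this
      exact this.mono_left nhdsWithin_le_nhds
    · filter_upwards [self_mem_nhdsWithin] with δ hδ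
      have hδpos : (0 : ℝ) < δ := hδ
      simp only [Set.mem_compl_iff, Set.mem_singleton_iff]
      intro heq
      have : (δ : ℂ) = 0 := by
        have := congrArg (fun z => z - s₀) heq
        simpa using this
      rw [Complex.ofReal_eq_zero] at this
      exact hδpos.ne' this
  have hlim : Tendsto (fun δ : ℝ => ((s₀ + (δ : ℂ)) - s₀) * E (s₀ + (δ : ℂ)))
      (𝓝[>] (0 : ℝ)) (𝓝 r) := by
    have := hpole.comp hpath
    simpa only [Function.comp_def, hs₀] using this
  have hlim' : Tendsto (fun δ : ℝ => (δ : ℂ) * E (s₀ + (δ : ℂ))) (𝓝[>] (0 : ℝ)) (𝓝 r) := by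
    have heq : (fun δ : ℝ => ((s₀ + (δ : ℂ)) - s₀) * E (s₀ + (δ : ℂ))) =
        fun δ : ℝ => (δ : ℂ) * E (s₀ + (δ : ℂ)) := by
      funext δ; rw [add_sub_cancel_left]
    rwa [heq] at hlim
  have hFlim : Tendsto (fun δ : ℝ => (δ : ℂ) * F (s₀ + (δ : ℂ))) (𝓝[>] (0 : ℝ)) (𝓝 r) := by
    apply hlim'.congr'
    filter_upwards [self_mem_nhdsWithin] with δ hδ
    have hδpos : (0 : ℝ) < δ := hδ
    have hmem : s₀ + (δ : ℂ) ∈ U := by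
      simp only [hU, Set.mem_setOf_eq, Complex.add_re, hs₀re, Complex.ofReal_re]
      linarith
    rw [hEF hmem]
  have hnormlim : Tendsto (fun δ : ℝ => ‖(δ : ℂ) * F (s₀ + (δ : ℂ))‖) (𝓝[>] (0 : ℝ))
      (𝓝 ‖r‖) := hFlim.norm
  -- Step D: quantitative bound
  set K : ℝ := (‖s₀‖ + 1) * 2 ^ (|σ₀| + 2) with hK
  have hKpos : 0 < K := by positivity
  have hrK : ∀ ε : ℝ, 0 < ε → ‖r‖ ≤ ε * K := by
    intro ε hε
    obtain ⟨N₂, hN₂⟩ := eventually_atTop.mp (isLittleO_iff.mp h' hε)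
    set N₀ : ℕ := max N₂ 1 with hN₀def
    have hN₀1 : 1 ≤ N₀ := le_max_right _ _
    have hN₀b : ∀ N : ℕ, N₀ ≤ N → ‖psum α N‖ ≤ ε * (N : ℝ) ^ σ₀ := by
      intro N hN
      have h1 := hN₂ N (le_trans (le_max_left _ _) hN)
      have hNpos : (0 : ℝ) < (N : ℝ) := by
        have : 1 ≤ N := le_trans hN₀1 hN
        exact_mod_cast this
      rwa [norm_norm, Real.norm_of_nonneg (Real.rpow_nonneg hNpos.le _)] at h1
    set C₁ : ℝ := ∑ N ∈ Finset.range N₀, ‖psum α N‖ * ((N : ℝ) ^ (-σ₀) +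
      ((N : ℝ) + 1) ^ (-σ₀)) with hC₁
    have hC₁nn : 0 ≤ C₁ := Finset.sum_nonneg fun n _ => by positivity
    -- claim : pointwise bound for 0 < δ ≤ 1
    have claim : ∀ δ : ℝ, 0 < δ → δ ≤ 1 →
        ‖(δ : ℂ) * F (s₀ + (δ : ℂ))‖ ≤ δ * C₁ + ε * K * (δ + 1) := by
      intro δ hδ0 hδ1
      set s : ℂ := s₀ + (δ : ℂ) with hsdef
      have hsre : s.re = σ₀ + δ := by
        rw [hsdef, Complex.add_re, hs₀re, Complex.ofReal_re]
      have hsgt : σ₀ < s.re := by rw [hsre]; linarith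
      have hsummable := summable_norm_term hM hM0 hsgt
      have hsummable' := (summable_nat_add_iff N₀).mpr hsummable
      -- head bound
      have hhead : ∀ N ∈ Finset.range N₀,
          ‖psum α N * ((N : ℂ) ^ (-s) - ((N : ℂ) + 1) ^ (-s))‖ ≤
            ‖psum α N‖ * ((N : ℝ) ^ (-σ₀) + ((N : ℝ) + 1) ^ (-σ₀)) := by
        intro N _
        rcases Nat.eq_zero_or_pos N with rfl | hN
        · simp [psum_zero]
        · have hN1 : (1 : ℝ) ≤ (N : ℝ) := by exact_mod_cast hN
          have e1 : ‖(N : ℂ) ^ (-s)‖ = (N : ℝ) ^ (-s.re) := by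
            rw [show ((N : ℂ)) = (((N : ℝ) : ℝ) : ℂ) by push_cast; rfl,
              Complex.norm_cpow_eq_rpow_re_of_pos (by linarith), Complex.neg_re]
          have e2 : ‖((N : ℂ) + 1) ^ (-s)‖ = ((N : ℝ) + 1) ^ (-s.re) := by
            rw [show ((N : ℂ) + 1) = ((((N : ℝ) + 1) : ℝ) : ℂ) by
              push_cast; ring, Complex.norm_cpow_eq_rpow_re_of_pos (by linarith),
              Complex.neg_re]
          have e3 : (N : ℝ) ^ (-s.re) ≤ (N : ℝ) ^ (-σ₀) :=
            Real.rpow_le_rpow_of_exponent_le hN1 (by rw [hsre]; linarith)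
          have e4 : ((N : ℝ) + 1) ^ (-s.re) ≤ ((N : ℝ) + 1) ^ (-σ₀) :=
            Real.rpow_le_rpow_of_exponent_le (by linarith) (by rw [hsre]; linarith)
          calc ‖psum α N * ((N : ℂ) ^ (-s) - ((N : ℂ) + 1) ^ (-s))‖
              = ‖psum α N‖ * ‖(N : ℂ) ^ (-s) - ((N : ℂ) + 1) ^ (-s)‖ := norm_mul _ _
            _ ≤ ‖psum α N‖ * (‖(N : ℂ) ^ (-s)‖ + ‖((N : ℂ) + 1) ^ (-s)‖) :=
                mul_le_mul_of_nonneg_left (norm_sub_le _ _) (norm_nonneg _)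
            _ ≤ ‖psum α N‖ * ((N : ℝ) ^ (-σ₀) + ((N : ℝ) + 1) ^ (-σ₀)) := by
                rw [e1, e2]
                exact mul_le_mul_of_nonneg_left (by linarith) (norm_nonneg _)
      -- tail bound
      have htail : ∀ N : ℕ,
          ‖psum α (N + N₀) * (((N + N₀ : ℕ) : ℂ) ^ (-s) - (((N + N₀ : ℕ) : ℂ) + 1) ^ (-s))‖ ≤
            ε * K * ((N : ℝ) + 1) ^ (-(1 + δ)) := by
        intro N
        have hn1 : 1 ≤ N + N₀ := le_trans hN₀1 (Nat.le_add_left _ _)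
        have hnpos : (0 : ℝ) < ((N + N₀ : ℕ) : ℝ) := by exact_mod_cast hn1
        have hcd := cpow_diff_bound s hn1
        have hps := hN₀b (N + N₀) (Nat.le_add_left _ _)
        have hnorm_s : ‖s‖ ≤ ‖s₀‖ + 1 := by
          calc ‖s‖ ≤ ‖s₀‖ + ‖(δ : ℂ)‖ := norm_add_le _ _
            _ = ‖s₀‖ + |δ| := by rw [Complex.norm_real]; rfl
            _ ≤ ‖s₀‖ + 1 := by rw [abs_of_pos hδ0]; linarith
        have habs : |s.re + 1| ≤ |σ₀| + 2 := by
          rw [hsre, abs_le]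
          constructor
          · have := neg_abs_le σ₀; linarith
          · have := le_abs_self σ₀; linarith
        have h2b : (2 : ℝ) ^ |s.re + 1| ≤ 2 ^ (|σ₀| + 2) :=
          Real.rpow_le_rpow_of_exponent_le one_le_two habs
        have hKb : ‖s‖ * 2 ^ |s.re + 1| ≤ K := by
          rw [hK]
          exact mul_le_mul hnorm_s h2b (by positivity) (by positivity)
        have hrw : ((N + N₀ : ℕ) : ℝ) ^ σ₀ * ((N + N₀ : ℕ) : ℝ) ^ (-s.re - 1) =
            ((N + N₀ : ℕ) : ℝ) ^ (-(1 + δ)) := by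
          rw [← Real.rpow_add hnpos, hsre]
          ring_nf
        have hmono : ((N + N₀ : ℕ) : ℝ) ^ (-(1 + δ)) ≤ ((N : ℝ) + 1) ^ (-(1 + δ)) := by
          apply Real.rpow_le_rpow_of_nonpos (by positivity) _ (by linarith)
          have : N + 1 ≤ N + N₀ := by omega
          exact_mod_cast this
        calc ‖psum α (N + N₀) * (((N + N₀ : ℕ) : ℂ) ^ (-s) - (((N + N₀ : ℕ) : ℂ) + 1) ^ (-s))‖
            = ‖psum α (N + N₀)‖ * ‖((N + N₀ : ℕ) : ℂ) ^ (-s) -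
                (((N + N₀ : ℕ) : ℂ) + 1) ^ (-s)‖ := norm_mul _ _
          _ ≤ (ε * ((N + N₀ : ℕ) : ℝ) ^ σ₀) *
                (‖s‖ * 2 ^ |s.re + 1| * ((N + N₀ : ℕ) : ℝ) ^ (-s.re - 1)) :=
              mul_le_mul hps hcd (norm_nonneg _) (by positivity)
          _ ≤ (ε * ((N + N₀ : ℕ) : ℝ) ^ σ₀) * (K * ((N + N₀ : ℕ) : ℝ) ^ (-s.re - 1)) := by
              apply mul_le_mul_of_nonneg_left _ (by positivity)
              exact mul_le_mul_of_nonneg_right hKb (Real.rpow_nonneg hnpos.le _)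
          _ = ε * K * (((N + N₀ : ℕ) : ℝ) ^ σ₀ * ((N + N₀ : ℕ) : ℝ) ^ (-s.re - 1)) := by ring
          _ = ε * K * ((N + N₀ : ℕ) : ℝ) ^ (-(1 + δ)) := by rw [hrw]
          _ ≤ ε * K * ((N : ℝ) + 1) ^ (-(1 + δ)) := by
              apply mul_le_mul_of_nonneg_left hmono (by positivity)
      -- assemble
      have hzsum : Summable (fun N : ℕ => ((N : ℝ) + 1) ^ (-(1 + δ))) := by
        have h1 : Summable (fun N : ℕ => ((N : ℝ)) ^ (-(1 + δ))) :=
          Real.summable_nat_rpow.2 (by linarith)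
        have h2 := (summable_nat_add_iff 1).2 h1
        simpa [Nat.cast_add, Nat.cast_one] using h2
      have htailsum : (∑' N : ℕ, ‖psum α (N + N₀) * (((N + N₀ : ℕ) : ℂ) ^ (-s) -
          (((N + N₀ : ℕ) : ℂ) + 1) ^ (-s))‖) ≤ ε * K * (1 + 1 / δ) := by
        calc (∑' N : ℕ, ‖psum α (N + N₀) * (((N + N₀ : ℕ) : ℂ) ^ (-s) -
            (((N + N₀ : ℕ) : ℂ) + 1) ^ (-s))‖)
            ≤ ∑' N : ℕ, ε * K * ((N : ℝ) + 1) ^ (-(1 + δ)) :=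
              Summable.tsum_le_tsum htail hsummable' (hzsum.mul_left _)
          _ = ε * K * ∑' N : ℕ, ((N : ℝ) + 1) ^ (-(1 + δ)) := tsum_mul_left
          _ ≤ ε * K * (1 + 1 / δ) := by
              apply mul_le_mul_of_nonneg_left (zeta_tsum_bound hδ0) (by positivity)
      have hsplit := (Summable.sum_add_tsum_nat_add N₀ hsummable).symm
      have hFnorm : ‖F s‖ ≤ C₁ + ε * K * (1 + 1 / δ) := by
        calc ‖F s‖ ≤ ∑' N : ℕ, ‖psum α N * ((N : ℂ) ^ (-s) - ((N : ℂ) + 1) ^ (-s))‖ :=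
              norm_tsum_le_tsum_norm hsummable
          _ = (∑ N ∈ Finset.range N₀, ‖psum α N * ((N : ℂ) ^ (-s) - ((N : ℂ) + 1) ^ (-s))‖) +
              ∑' N : ℕ, ‖psum α (N + N₀) * (((N + N₀ : ℕ) : ℂ) ^ (-s) -
                (((N + N₀ : ℕ) : ℂ) + 1) ^ (-s))‖ := hsplit
          _ ≤ C₁ + ε * K * (1 + 1 / δ) :=
              add_le_add (Finset.sum_le_sum hhead) htailsum
      calc ‖(δ : ℂ) * F s‖ = δ * ‖F s‖ := by
            rw [norm_mul, Complex.norm_real, Real.norm_of_nonneg hδ0.le]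
        _ ≤ δ * (C₁ + ε * K * (1 + 1 / δ)) := mul_le_mul_of_nonneg_left hFnorm hδ0.le
        _ = δ * C₁ + ε * K * (δ + 1) := by
            field_simp
    -- pass to the limit
    have hg : Tendsto (fun δ : ℝ => δ * C₁ + ε * K * (δ + 1)) (𝓝[>] (0 : ℝ))
        (𝓝 (ε * K)) := by
      have hcont : Continuous (fun δ : ℝ => δ * C₁ + ε * K * (δ + 1)) :=
        (continuous_id.mul continuous_const).add
          (continuous_const.mul (continuous_id.add continuous_const))
      have := (hcont.tendsto 0).mono_left (nhdsWithin_le_nhds (s := Set.Ioi (0 : ℝ)))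
      simpa using this
    have hev : ∀ᶠ δ : ℝ in 𝓝[>] (0 : ℝ), ‖(δ : ℂ) * F (s₀ + (δ : ℂ))‖ ≤
        δ * C₁ + ε * K * (δ + 1) := by
      have hIoc : Set.Ioc (0 : ℝ) 1 ∈ 𝓝[>] (0 : ℝ) :=
        Ioc_mem_nhdsGT_of_mem (by constructor <;> norm_num)
      filter_upwards [hIoc] with δ hδ
      exact claim δ hδ.1 hδ.2
    exact le_of_tendsto_of_tendsto hnormlim hg hev
  -- conclude r = 0
  have hrpos : 0 < ‖r‖ := norm_pos_iff.mpr hr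
  have := hrK (‖r‖ / (2 * K)) (by positivity)
  rw [div_mul_eq_mul_div, mul_comm] at this
  have : ‖r‖ ≤ ‖r‖ / 2 := by
    calc ‖r‖ ≤ K * ‖r‖ / (2 * K) := this
      _ = ‖r‖ / 2 := by field_simp
  linarith
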